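/- Let G act on a simplicial complex K by exchangeable vertices, let H be the group of all exchange automorphisms of K/G (generated by all transpositions of exchangeable vertices of K/G), and let t be a transposition in Sym(Vert(K)) that acts as an exchange automorphism of K exchanging vertices u and w. Then the induced transposition t̄ on Vert(K/G) exchanging the orbits G·u and G·w (and fixing all other orbits) defines an exchange automorphism of K/G; moreover t̄ is the identity if and only if t ∈ G. -/

import Mathlib

variable {V : Type*}

def IsComplex (F : Set (Finset V)) : Prop :=
  (∀ s ∈ F, s.Nonempty) ∧ ∀ s ∈ F, ∀ t ⊆ s, t.Nonempty → t ∈ F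

def IsAuto [DecidableEq V] (F : Set (Finset V)) (φ : Equiv.Perm V) : Prop :=
  ∀ s : Finset V, s ∈ F ↔ s.image φ ∈ F

def IsExchange [DecidableEq V] (F : Set (Finset V)) (u v : V) (φ : Equiv.Perm V) : Prop :=
  IsAuto F φ ∧ φ u = v ∧ φ v = u ∧ ∀ w : V, w ≠ u → w ≠ v → φ w = w

def Exchangeable [DecidableEq V] (F : Set (Finset V)) (u v : V) : Prop :=
  ∃ φ : Equiv.Perm V, IsExchange F u v φ

def vertices (F : Set (Finset V)) : Set V := {v | ({v} : Finset V) ∈ F}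

def quotFaces (F : Set (Finset V)) (G : Subgroup (Equiv.Perm V)) : Set (Finset (Set V)) :=
  {S | ∃ s ∈ F, (↑S : Set (Set V)) = (fun v => MulAction.orbit (↥G) v) '' ↑s}

def ActsByExch [DecidableEq V] (F : Set (Finset V)) (G : Subgroup (Equiv.Perm V)) : Prop :=
  ∃ M : Set (Equiv.Perm V), G = Subgroup.closure M ∧
    ∀ φ ∈ M, ∃ u v : V, u ≠ v ∧ IsExchange F u v φ

def fullSubFaces (F : Set (Finset V)) (W : Set V) : Set (Finset V) :=
  {s ∈ F | ↑s ⊆ W}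

section Aux

variable [DecidableEq V]

lemma isAuto_one (F : Set (Finset V)) : IsAuto F 1 := by
  intro s; simp

lemma isAuto_mul {F : Set (Finset V)} {φ ψ : Equiv.Perm V} (hφ : IsAuto F φ)
    (hψ : IsAuto F ψ) : IsAuto F (φ * ψ) := by
  intro s
  have : s.image ⇑(φ * ψ) = (s.image ψ).image φ := by
    rw [Finset.image_image]; rfl
  rw [this, ← hφ, ← hψ]

lemma isAuto_inv {F : Set (Finset V)} {φ : Equiv.Perm V} (h : IsAuto F φ) :
    IsAuto F φ⁻¹ := by
  intro s
  have h2 := h (s.image ⇑φ⁻¹)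
  have h3 : (s.image ⇑φ⁻¹).image ⇑φ = s := by
    rw [Finset.image_image]
    simp [Function.comp_def]
  rw [h3] at h2; exact h2.symm

lemma isExchange_eq_swap {F : Set (Finset V)} {a b : V} {φ : Equiv.Perm V}
    (h : IsExchange F a b φ) : φ = Equiv.swap a b := by
  obtain ⟨-, h1, h2, h3⟩ := h
  ext x
  rcases eq_or_ne x a with rfl | hxa
  · simp [h1]
  rcases eq_or_ne x b with rfl | hxb
  · simp [h2]
  · rw [h3 x hxa hxb, Equiv.swap_apply_of_ne_of_ne hxa hxb]

lemma isAuto_of_mem {F : Set (Finset V)} {G : Subgroup (Equiv.Perm V)}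
    (hG : ActsByExch F G) : ∀ g ∈ G, IsAuto F g := by
  obtain ⟨M, rfl, hM⟩ := hG
  intro g hg
  induction hg using Subgroup.closure_induction with
  | mem x hx =>
      obtain ⟨a, b, -, hex⟩ := hM x hx
      exact hex.1
  | one => exact isAuto_one F
  | mul x y hx hy px py => exact isAuto_mul px py
  | inv x hx px => exact isAuto_inv px

lemma swap_mem_of_apply {F : Set (Finset V)} {G : Subgroup (Equiv.Perm V)}
    (hG : ActsByExch F G) : ∀ g ∈ G, ∀ x : V, Equiv.swap x (g x) ∈ G := by
  obtain ⟨M, rfl, hM⟩ := hG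
  intro g hg
  induction hg using Subgroup.closure_induction with
  | mem φ hφ =>
      intro x
      obtain ⟨a, b, hab, hex⟩ := hM φ hφ
      have hφeq := isExchange_eq_swap hex
      have hφG : φ ∈ Subgroup.closure M := Subgroup.subset_closure hφ
      rcases eq_or_ne x a with rfl | hxa
      · rw [hφeq, Equiv.swap_apply_left, ← hφeq]; exact hφG
      rcases eq_or_ne x b with rfl | hxb
      · rw [hφeq, Equiv.swap_apply_right, Equiv.swap_comm, ← hφeq]; exact hφG
      · rw [hφeq, Equiv.swap_apply_of_ne_of_ne hxa hxb, Equiv.swap_self]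
        exact Subgroup.one_mem _
  | one =>
      intro x
      rw [Equiv.Perm.one_apply, Equiv.swap_self]
      exact Subgroup.one_mem _
  | mul a b ha hb pa pb =>
      intro x
      have hy : Equiv.swap x (b x) ∈ Subgroup.closure M := pb x
      have hz : Equiv.swap (b x) (a (b x)) ∈ Subgroup.closure M := pa (b x)
      have hab : (a * b) x = a (b x) := rfl
      rw [hab]
      set y := b x with hydef
      set z := a (b x) with hzdef
      rcases eq_or_ne x y with hxy | hxy
      · rw [hxy]; exact hz
      rcases eq_or_ne y z with hyz | hyz
      · rw [← hyz]; exact hy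
      rcases eq_or_ne x z with hxz | hxz
      · rw [hxz, Equiv.swap_self]
        exact Subgroup.one_mem _
      · have key : Equiv.swap ((Equiv.swap x y) y) ((Equiv.swap x y) z)
            = Equiv.swap x y * Equiv.swap y z * (Equiv.swap x y)⁻¹ :=
          Equiv.swap_apply_apply _ _ _
        rw [Equiv.swap_apply_right, Equiv.swap_apply_of_ne_of_ne (Ne.symm hxz) (Ne.symm hyz)]
          at key
        rw [key]
        exact Subgroup.mul_mem _ (Subgroup.mul_mem _ hy hz) (Subgroup.inv_mem _ hy)
  | inv a ha pa =>
      intro x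
      have := pa (a⁻¹ x)
      rw [show a (a⁻¹ x) = x from Equiv.apply_symm_apply a x] at this
      rw [Equiv.swap_comm]
      exact this

lemma key_lemma {F : Set (Finset V)} [DecidableEq (Set V)] (hF : IsComplex F)
    {G : Subgroup (Equiv.Perm V)} (hGa : ∀ g ∈ G, IsAuto F g) {u w : V}
    (htauto : IsAuto F (Equiv.swap u w))
    (hne : MulAction.orbit (↥G) u ≠ MulAction.orbit (↥G) w)
    {S : Finset (Set V)} (hS : S ∈ quotFaces F G)
    (huS : MulAction.orbit (↥G) u ∈ S) (hwS : MulAction.orbit (↥G) w ∉ S) :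
    S.image (Equiv.swap (MulAction.orbit (↥G) u) (MulAction.orbit (↥G) w)) ∈ quotFaces F G := by
  classical
  obtain ⟨s, hsF, hSs⟩ := hS
  set Ou := MulAction.orbit (↥G) u with hOu
  set Ow := MulAction.orbit (↥G) w with hOw
  -- find a representative of Ou in s
  have huS' : Ou ∈ (fun v => MulAction.orbit (↥G) v) '' (↑s : Set V) := by
    rw [← hSs]; exact_mod_cast huS
  obtain ⟨v₀, hv₀s, hv₀⟩ := huS'
  have hv₀' : MulAction.orbit (↥G) v₀ = Ou := hv₀
  -- shrink s to have a unique representative of Ou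
  set sh : Finset V := insert v₀ (s.filter (fun x => MulAction.orbit (↥G) x ≠ Ou)) with hsh
  have hshsub : sh ⊆ s := by
    intro x hx
    rcases Finset.mem_insert.1 hx with rfl | hx
    · exact hv₀s
    · exact (Finset.mem_filter.1 hx).1
  have hshF : sh ∈ F := hF.2 s hsF sh hshsub ⟨v₀, Finset.mem_insert_self _ _⟩
  have horb_sh : (fun v => MulAction.orbit (↥G) v) '' (↑sh : Set V) = (↑S : Set (Set V)) := by
    rw [hSs]
    apply Set.Subset.antisymm
    · exact Set.image_mono (by exact_mod_cast hshsub)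
    · rintro O ⟨x, hxs, rfl⟩
      by_cases hx : MulAction.orbit (↥G) x = Ou
      · exact ⟨v₀, Finset.mem_insert_self _ _, by rw [hv₀, ← hx]⟩
      · exact ⟨x, Finset.mem_insert_of_mem (Finset.mem_filter.2 ⟨hxs, hx⟩), rfl⟩
  -- get g ∈ G with g u = v₀
  have hv₀mem : v₀ ∈ Ou := by rw [← hv₀']; exact MulAction.mem_orbit_self v₀
  obtain ⟨γ, hγ⟩ := hv₀mem
  set x₀ : V := (γ : Equiv.Perm V) w with hx₀
  have hγu : (γ : Equiv.Perm V) u = v₀ := hγ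
  have hx₀orb : MulAction.orbit (↥G) x₀ = Ow := by
    rw [hOw, ← MulAction.orbit_smul γ w]; rfl
  -- the transposition (v₀ x₀) is an automorphism of F
  set τ : Equiv.Perm V := Equiv.swap v₀ x₀ with hτ
  have hτauto : IsAuto F τ := by
    have : τ = (γ : Equiv.Perm V) * Equiv.swap u w * (γ : Equiv.Perm V)⁻¹ := by
      rw [hτ, ← hγu, hx₀, Equiv.swap_apply_apply]
    rw [this]
    exact isAuto_mul (isAuto_mul (hGa _ γ.2) htauto) (isAuto_inv (hGa _ γ.2))
  refine ⟨sh.image τ, (hτauto sh).1 hshF, ?_⟩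
  rw [Finset.coe_image, Finset.coe_image, Set.image_image, ← horb_sh, Set.image_image]
  apply Set.image_congr
  intro z hz
  rcases Finset.mem_insert.1 (by exact_mod_cast hz) with rfl | hz'
  · rw [hτ, Equiv.swap_apply_left, hx₀orb, hv₀', Equiv.swap_apply_left]
  · have hzorb : MulAction.orbit (↥G) z ≠ Ou := (Finset.mem_filter.1 hz').2
    have hzS : MulAction.orbit (↥G) z ∈ (↑S : Set (Set V)) := by
      rw [hSs]; exact ⟨z, by exact_mod_cast (Finset.mem_filter.1 hz').1, rfl⟩
    have hzw : MulAction.orbit (↥G) z ≠ Ow := by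
      intro h; rw [h] at hzS; exact hwS (by exact_mod_cast hzS)
    have hzv₀ : z ≠ v₀ := by intro h; rw [h, hv₀'] at hzorb; exact hzorb rfl
    have hzx₀ : z ≠ x₀ := by intro h; rw [h, hx₀orb] at hzw; exact hzw rfl
    rw [hτ, Equiv.swap_apply_of_ne_of_ne hzv₀ hzx₀,
      Equiv.swap_apply_of_ne_of_ne hzorb hzw]

lemma quot_auto {F : Set (Finset V)} [DecidableEq (Set V)] (hF : IsComplex F)
    {G : Subgroup (Equiv.Perm V)} (hG : ActsByExch F G) {u w : V}
    (htauto : IsAuto F (Equiv.swap u w)) :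
    IsAuto (quotFaces F G) (Equiv.swap (MulAction.orbit (↥G) u) (MulAction.orbit (↥G) w)) := by
  classical
  set Ou := MulAction.orbit (↥G) u with hOu
  set Ow := MulAction.orbit (↥G) w with hOw
  set σ : Equiv.Perm (Set V) := Equiv.swap Ou Ow with hσ
  rcases eq_or_ne Ou Ow with hOuw | hOuw
  · rw [hσ, hOuw, Equiv.swap_self]
    intro s; simp
  have hGa := isAuto_of_mem hG
  have forward : ∀ S ∈ quotFaces F G, S.image σ ∈ quotFaces F G := by
    intro S hS
    by_cases huS : Ou ∈ S <;> by_cases hwS : Ow ∈ S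
    · -- both in S : image = S
      have : S.image σ = S := by
        apply Finset.eq_of_subset_of_card_le
        · rw [Finset.image_subset_iff]
          intro X hX
          rcases eq_or_ne X Ou with rfl | hXu
          · rw [hσ, Equiv.swap_apply_left]; exact hwS
          rcases eq_or_ne X Ow with rfl | hXw
          · rw [hσ, Equiv.swap_apply_right]; exact huS
          · rw [hσ, Equiv.swap_apply_of_ne_of_ne hXu hXw]; exact hX
        · rw [Finset.card_image_of_injective _ σ.injective]
      rw [this]; exact hS
    · exact key_lemma hF hGa htauto hOuw hS huS hwS
    · have h := key_lemma hF hGa (by rwa [Equiv.swap_comm]) (Ne.symm hOuw) hS hwS huS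
      rwa [← Equiv.swap_comm] at h
    · -- neither in S : image = S
      have : S.image σ = S := by
        apply Finset.image_congr (g := id) ?_ |>.trans (Finset.image_id)
        intro X hX
        have hXu : X ≠ Ou := by rintro rfl; exact huS hX
        have hXw : X ≠ Ow := by rintro rfl; exact hwS hX
        rw [hσ, Equiv.swap_apply_of_ne_of_ne hXu hXw]; rfl
      rw [this]; exact hS
  intro S
  constructor
  · exact forward S
  · intro h
    have h2 := forward _ h
    have : (S.image σ).image σ = S := by
      rw [Finset.image_image]
      have : ⇑σ ∘ ⇑σ = id := by
        funext a; simp [hσ, Equiv.swap_apply_self]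
      rw [this, Finset.image_id]
    rwa [this] at h2

end Aux

/-- Let `G` act on `F` by exchangeable vertices, and let the transposition `(u w)` act
as an exchange automorphism of `F`. Then the induced transposition on the vertices of
`F/G`, exchanging the orbits `G·u` and `G·w` and fixing all other orbits, is an
exchange automorphism of `F/G`; and it is the identity iff `(u w) ∈ G`. -/
theorem induced_transposition_exchange [DecidableEq V] [DecidableEq (Set V)]
    (F : Set (Finset V)) (hF : IsComplex F)
    (G : Subgroup (Equiv.Perm V)) (hG : ActsByExch F G)
    (u w : V) (hu : u ∈ vertices F) (hw : w ∈ vertices F) (hne : u ≠ w)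
    (ht : IsExchange F u w (Equiv.swap u w)) :
    IsExchange (quotFaces F G) (MulAction.orbit (↥G) u) (MulAction.orbit (↥G) w)
      (Equiv.swap (MulAction.orbit (↥G) u) (MulAction.orbit (↥G) w)) ∧
    (Equiv.swap (MulAction.orbit (↥G) u) (MulAction.orbit (↥G) w) = 1 ↔
      Equiv.swap u w ∈ G) := by
  constructor
  · refine ⟨quot_auto hF hG ht.1, Equiv.swap_apply_left _ _, Equiv.swap_apply_right _ _, ?_⟩
    intro X hX1 hX2
    exact Equiv.swap_apply_of_ne_of_ne hX1 hX2
  · rw [Equiv.swap_eq_one_iff]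
    constructor
    · intro hOrb
      have hwmem : w ∈ MulAction.orbit (↥G) u := by
        rw [hOrb]; exact MulAction.mem_orbit_self w
      obtain ⟨γ, hγ⟩ := hwmem
      have h1 : (γ : Equiv.Perm V) u = w := hγ
      have h2 := swap_mem_of_apply hG (γ : Equiv.Perm V) γ.2 u
      rwa [h1] at h2
    · intro hmem
      have hw' : w ∈ MulAction.orbit (↥G) u := ⟨⟨Equiv.swap u w, hmem⟩, Equiv.swap_apply_left u w⟩
      exact (MulAction.orbit_eq_iff.2 hw').symm
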